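/- Let S¹_{k,ℓ} be the metric space on k points x₀,…,x_{k-1} with d(xᵢ,xⱼ) = ℓ·min(|i-j|, k-|i-j|). For ℓ ≤ ε < ⌈k/3⌉·ℓ, the Vietoris-Rips complex VR_ε(S¹_{k,ℓ}) has first homology of rank at least 1 (with field coefficients). -/

import Mathlib

/-- The metric circle `S¹_{k,ℓ}`: `k` equally spaced points with
`d(xᵢ,xⱼ) = ℓ·min(|i-j|, k-|i-j|)`. -/
noncomputable def circDist (k : ℕ) (ℓ : ℝ) (i j : Fin k) : ℝ :=
  ℓ * (min (((i : ℤ) - (j : ℤ)).natAbs) (k - ((i : ℤ) - (j : ℤ)).natAbs) : ℕ)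

/-- The simplicial boundary map `∂₁` on (oriented) `1`-chains with `ℚ`-coefficients of
a complex with vertex set `Fin k`: `∂₁[a,b] = [b] - [a]`. -/
def bd1 (k : ℕ) (c : Fin k × Fin k → ℚ) : Fin k → ℚ :=
  fun v => ∑ e : Fin k × Fin k,
    c e * ((if e.2 = v then 1 else 0) - (if e.1 = v then 1 else 0))

/-- The simplicial boundary map `∂₂` on `2`-chains with `ℚ`-coefficients:
`∂₂[a,b,c] = [b,c] - [a,c] + [a,b]`. -/
def bd2 (k : ℕ) (c : Fin k × Fin k × Fin k → ℚ) : Fin k × Fin k → ℚ :=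
  fun e => ∑ t : Fin k × Fin k × Fin k,
    c t * ((if (t.2.1, t.2.2) = e then 1 else 0) - (if (t.1, t.2.2) = e then 1 else 0)
      + (if (t.1, t.2.1) = e then 1 else 0))

/-- Balanced residue of `n` mod `k`. -/
def bal (k : ℕ) (n : ℤ) : ℤ := if (k : ℤ) < 2 * (n % k) then n % k - k else n % k

lemma bal_modEq (k : ℕ) (n : ℤ) : bal k n ≡ n [ZMOD (k : ℤ)] := by
  unfold bal
  split
  · calc (n % (k:ℤ) - k) % k = n % k % k := by simp [Int.sub_emod]
      _ = n % k := Int.emod_emod_of_dvd _ dvd_rfl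
  · exact Int.emod_emod_of_dvd _ dvd_rfl

lemma bal_add (k : ℕ) (x y : ℤ)
    (hx : 3 * |bal k x| < k) (hy : 3 * |bal k y| < k) (hxy : 3 * |bal k (x + y)| < k) :
    bal k x + bal k y = bal k (x + y) := by
  have h : bal k x + bal k y - bal k (x + y) ≡ x + y - (x + y) [ZMOD (k:ℤ)] :=
    ((bal_modEq k x).add (bal_modEq k y)).sub (bal_modEq k (x + y))
  simp only [sub_self] at h
  have hdvd : (k : ℤ) ∣ bal k x + bal k y - bal k (x + y) :=
    (Int.modEq_zero_iff_dvd).mp h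
  have := Int.eq_zero_of_abs_lt_dvd hdvd (by
    have := abs_sub (bal k x + bal k y) (bal k (x + y))
    have := abs_add_le (bal k x) (bal k y)
    omega)
  omega

lemma bal_abs_aux (k : ℕ) (x : ℤ) (hxk : x < k) (hxk' : -(k:ℤ) < x)
    (h : (0 ≤ x ∧ x % k = x) ∨ (x < 0 ∧ x % k = x + k)) :
    (bal k x).natAbs = min ((-x).natAbs) (k - (-x).natAbs) := by
  simp only [bal]
  rcases h with ⟨h0, h⟩ | ⟨h0, h⟩ <;> rw [h, Nat.min_def] <;> split <;> split <;> omega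

/-- Key computation of `|bal|` for differences of elements of `Fin k`. -/
lemma natAbs_bal_fin (k : ℕ) (a b : Fin k) :
    (bal k ((b : ℤ) - (a : ℤ))).natAbs
      = min (((a : ℤ) - (b : ℤ)).natAbs) (k - ((a : ℤ) - (b : ℤ)).natAbs) := by
  have ha := a.isLt; have hb := b.isLt
  have hak : (a:ℤ) < k := by exact_mod_cast ha
  have hbk : (b:ℤ) < k := by exact_mod_cast hb
  have ha' : (0:ℤ) ≤ a := Int.ofNat_nonneg _
  have hb' : (0:ℤ) ≤ b := Int.ofNat_nonneg _
  have h : (0 ≤ (b:ℤ) - a ∧ ((b:ℤ) - a) % k = (b:ℤ) - a)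
      ∨ ((b:ℤ) - a < 0 ∧ ((b:ℤ) - a) % k = ((b:ℤ) - a) + k) := by
    rcases le_or_gt 0 ((b:ℤ) - a) with h0 | h0
    · exact Or.inl ⟨h0, Int.emod_eq_of_lt h0 (by omega)⟩
    · refine Or.inr ⟨h0, ?_⟩
      have h1 : (((b:ℤ) - a) + k) % (k:ℤ) = ((b:ℤ) - a) + k :=
        Int.emod_eq_of_lt (by omega) (by omega)
      calc ((b:ℤ) - a) % (k:ℤ) = (((b:ℤ) - a) + k) % k := by simp [Int.add_emod]
        _ = ((b:ℤ) - a) + k := h1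
  have := bal_abs_aux k ((b:ℤ) - a) (by omega) (by omega) h
  rwa [neg_sub] at this

/-- for `ℓ ≤ ε < ⌈k/3⌉·ℓ`, the Vietoris–Rips complex
`VR_ε(S¹_{k,ℓ})` has first homology of rank at least `1` (with field coefficients,
here `ℚ`): there is a `1`-cycle supported on the edges of `VR_ε` (pairs at distance
`≤ ε`) which is not the boundary of any `2`-chain supported on the triangles of
`VR_ε` (triples with pairwise distances `≤ ε`). -/
theorem vietorisRips_circle_H1_nontrivial (k : ℕ) (ℓ ε : ℝ) (hℓ : 0 < ℓ)
    (h1 : ℓ ≤ ε) (h2 : ε < (⌈(k : ℝ) / 3⌉₊ : ℝ) * ℓ) :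
    ∃ z : Fin k × Fin k → ℚ,
      (∀ e, z e ≠ 0 → circDist k ℓ e.1 e.2 ≤ ε) ∧
      bd1 k z = 0 ∧
      ∀ w : Fin k × Fin k × Fin k → ℚ,
        (∀ t, w t ≠ 0 → circDist k ℓ t.1 t.2.1 ≤ ε ∧ circDist k ℓ t.1 t.2.2 ≤ ε ∧
          circDist k ℓ t.2.1 t.2.2 ≤ ε) →
        bd2 k w ≠ z := by
  set C : ℕ := ⌈(k : ℝ) / 3⌉₊ with hC
  -- `C ≥ 2`
  have hC2 : 2 ≤ C := by
    by_contra hc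
    push_neg at hc
    have hC1 : (C:ℝ) ≤ 1 := by exact_mod_cast Nat.lt_succ_iff.mp hc
    nlinarith
  -- `3 * C ≤ k + 2`
  have hCk : 3 * C ≤ k + 2 := by
    have : C ≤ (k + 2) / 3 := by
      rw [hC, Nat.ceil_le]
      rw [div_le_iff₀ (by norm_num : (0:ℝ) < 3)]
      have : k ≤ 3 * ((k + 2) / 3) := by omega
      push_cast
      calc (k:ℝ) ≤ (3 * ((k + 2) / 3) : ℕ) := by exact_mod_cast this
        _ = ((k+2)/3 : ℕ) * 3 := by push_cast; ring
    omega
  have hk4 : 4 ≤ k := by omega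
  haveI : NeZero k := ⟨by omega⟩
  -- distance bound on the support gives the `bal` bound
  have key : ∀ a b : Fin k, circDist k ℓ a b ≤ ε → 3 * |bal k ((b:ℤ) - a)| < (k:ℤ) := by
    intro a b hd
    set m : ℕ := min (((a:ℤ) - b).natAbs) (k - ((a:ℤ) - b).natAbs) with hm
    have hde : circDist k ℓ a b = ℓ * m := rfl
    have hmC : m < C := by
      have h3 : ℓ * (m:ℝ) < ℓ * C := by
        rw [← hde]; calc circDist k ℓ a b ≤ ε := hd
          _ < (C:ℝ) * ℓ := h2
          _ = ℓ * C := by ring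
      have := (mul_lt_mul_iff_right₀ hℓ).mp h3
      exact_mod_cast this
    have hba : (bal k ((b:ℤ) - a)).natAbs = m := natAbs_bal_fin k a b
    have : |bal k ((b:ℤ) - a)| = (m : ℤ) := by rw [← hba]; exact Int.abs_eq_natAbs _
    rw [this]
    omega
  -- the cycle
  refine ⟨fun e => if e.2 = e.1 + 1 then 1 else 0, ?_, ?_, ?_⟩
  · -- edges of the cycle are in the complex
    rintro ⟨a, b⟩ hz
    simp only [ne_eq, ite_eq_right_iff, one_ne_zero, imp_false, not_not] at hz
    subst hz
    have hcd : circDist k ℓ a (a + 1) = ℓ * 1 := by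
      unfold circDist
      congr 1
      have hv : ((a + 1 : Fin k) : ℤ) = ((a.val + 1) % k : ℕ) := by
        simp [Fin.add_def]
      rw [hv]
      have ha := a.isLt
      rcases Nat.lt_or_ge (a.val + 1) k with h | h
      · rw [Nat.mod_eq_of_lt h]
        have h5 : (((a:ℤ) - ((a.val + 1 : ℕ) : ℤ))).natAbs = 1 := by push_cast; omega
        rw [h5]
        have hmin : min 1 (k - 1) = 1 := by rw [Nat.min_def]; split <;> omega
        rw [hmin]
        exact Nat.cast_one
      · have hk1 : a.val + 1 = k := by omega
        have h0 : (a.val + 1) % k = 0 := by rw [hk1, Nat.mod_self]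
        rw [h0]
        have h5 : (((a:ℤ) - ((0:ℕ):ℤ))).natAbs = k - 1 := by push_cast; omega
        rw [h5]
        have hmin : min (k-1) (k - (k-1)) = 1 := by rw [Nat.min_def]; split <;> omega
        rw [hmin]
        exact Nat.cast_one
    rw [hcd]; simpa using h1
  · -- it is a cycle
    funext v
    unfold bd1
    rw [Fintype.sum_prod_type]
    have step : ∀ a : Fin k,
        (∑ b : Fin k, (if b = a + 1 then (1:ℚ) else 0) *
          ((if b = v then 1 else 0) - (if a = v then 1 else 0)))
        = (if a + 1 = v then (1:ℚ) else 0) - (if a = v then 1 else 0) := by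
      intro a
      rw [Finset.sum_eq_single (a + 1)]
      · simp
      · intro b _ hb; simp [hb]
      · simp
    rw [Finset.sum_congr rfl (fun a _ => step a)]
    rw [Finset.sum_sub_distrib]
    have e1 : (∑ a : Fin k, if a + 1 = v then (1:ℚ) else 0) = 1 := by
      rw [Finset.sum_eq_single (v - 1)]
      · simp
      · intro a _ ha
        have : a + 1 ≠ v := by
          intro h; apply ha; rw [← h]; exact (add_sub_cancel_right a 1).symm
        simp [this]
      · simp
    have e2 : (∑ a : Fin k, if a = v then (1:ℚ) else 0) = 1 := by simp
    rw [e1, e2, sub_self]; rfl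
  · -- nontriviality
    intro w hw hcontra
    -- apply the winding functional to both sides
    have hΦ : ∑ e : Fin k × Fin k, bd2 k w e * ((bal k ((e.2:ℤ) - e.1) : ℤ) : ℚ)
        = ∑ e : Fin k × Fin k, (if e.2 = e.1 + 1 then (1:ℚ) else 0) *
            ((bal k ((e.2:ℤ) - e.1) : ℤ) : ℚ) := by
      rw [hcontra]
    -- RHS equals k
    have hRHS : (∑ e : Fin k × Fin k, (if e.2 = e.1 + 1 then (1:ℚ) else 0) *
        ((bal k ((e.2:ℤ) - e.1) : ℤ) : ℚ)) = (k : ℚ) := by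
      rw [Fintype.sum_prod_type]
      have step : ∀ a : Fin k,
          (∑ b : Fin k, (if b = a + 1 then (1:ℚ) else 0) * ((bal k ((b:ℤ) - a) : ℤ) : ℚ))
          = ((bal k (((a+1 : Fin k):ℤ) - a) : ℤ) : ℚ) := by
        intro a
        rw [Finset.sum_eq_single (a + 1)]
        · simp
        · intro b _ hb; simp [hb]
        · simp
      rw [Finset.sum_congr rfl (fun a _ => step a)]
      have hone : ∀ a : Fin k, bal k (((a+1 : Fin k):ℤ) - a) = 1 := by
        intro a
        have ha := a.isLt
        have hv : ((a + 1 : Fin k) : ℤ) = ((a.val + 1) % k : ℕ) := by simp [Fin.add_def]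
        have hmod : (((a+1 : Fin k):ℤ) - a) % (k:ℤ) = 1 := by
          rw [hv]
          rcases Nat.lt_or_ge (a.val + 1) k with h | h
          · rw [Nat.mod_eq_of_lt h]
            have : (((a.val + 1 : ℕ):ℤ) - a) = 1 := by push_cast; omega
            rw [this]
            exact Int.emod_eq_of_lt (by omega) (by exact_mod_cast (by omega : (1:ℤ) < (k:ℤ)))
          · have hk1 : a.val + 1 = k := by omega
            have h0 : (a.val + 1) % k = 0 := by rw [hk1, Nat.mod_self]
            rw [h0]
            have hval : (((0:ℕ):ℤ) - a) = 1 - k := by push_cast; omega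
            rw [hval]
            calc (1 - (k:ℤ)) % k = 1 % k := by simp [Int.sub_emod]
              _ = 1 := Int.emod_eq_of_lt (by omega) (by exact_mod_cast (by omega : 1 < k))
        unfold bal
        rw [hmod]
        have hlt : ¬ ((k:ℤ) < 2 * 1) := by
          have : (4:ℤ) ≤ k := by exact_mod_cast hk4
          omega
        rw [if_neg hlt]
      rw [Finset.sum_congr rfl (fun a _ => by rw [hone a])]
      simp
    -- LHS equals 0
    have hLHS : (∑ e : Fin k × Fin k, bd2 k w e * ((bal k ((e.2:ℤ) - e.1) : ℤ) : ℚ)) = 0 := by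
      unfold bd2
      simp only [Finset.sum_mul]
      rw [Finset.sum_comm]
      apply Finset.sum_eq_zero
      intro t _
      by_cases hwt : w t = 0
      · simp [hwt]
      · -- collapse the inner sum
        have hin : (∑ e : Fin k × Fin k,
            w t * ((if (t.2.1, t.2.2) = e then (1:ℚ) else 0) - (if (t.1, t.2.2) = e then 1 else 0)
              + (if (t.1, t.2.1) = e then 1 else 0)) * ((bal k ((e.2:ℤ) - e.1) : ℤ) : ℚ))
            = w t * (((bal k ((t.2.2:ℤ) - t.2.1) : ℤ) : ℚ)
                - ((bal k ((t.2.2:ℤ) - t.1) : ℤ) : ℚ)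
                + ((bal k ((t.2.1:ℤ) - t.1) : ℤ) : ℚ)) := by
          simp only [mul_assoc, ← Finset.mul_sum]
          congr 1
          simp only [sub_mul, add_mul, Finset.sum_sub_distrib, Finset.sum_add_distrib,
            ite_mul, one_mul, zero_mul, Finset.sum_ite_eq, Finset.mem_univ, if_true]
        rw [hin]
        obtain ⟨hd1, hd2, hd3⟩ := hw t hwt
        have b1 := key _ _ hd1
        have b2 := key _ _ hd2
        have b3 := key _ _ hd3
        have hadd : bal k ((t.2.1:ℤ) - t.1) + bal k ((t.2.2:ℤ) - t.2.1)
            = bal k ((t.2.2:ℤ) - t.1) := by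
          have := bal_add k ((t.2.1:ℤ) - t.1) ((t.2.2:ℤ) - t.2.1) b1 (by
            exact b3) (by
            have : ((t.2.1:ℤ) - t.1) + ((t.2.2:ℤ) - t.2.1) = (t.2.2:ℤ) - t.1 := by ring
            rw [this]; exact b2)
          have heq : ((t.2.1:ℤ) - t.1) + ((t.2.2:ℤ) - t.2.1) = (t.2.2:ℤ) - t.1 := by ring
          rw [heq] at this
          exact this
        have : ((bal k ((t.2.2:ℤ) - t.2.1) : ℤ) : ℚ) - ((bal k ((t.2.2:ℤ) - t.1) : ℤ) : ℚ)
            + ((bal k ((t.2.1:ℤ) - t.1) : ℤ) : ℚ) = 0 := by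
          rw [← hadd]; push_cast; ring
        rw [this, mul_zero]
    rw [hRHS, hLHS] at hΦ
    have : (k:ℚ) ≠ 0 := by positivity
    exact this hΦ.symm
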